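/- Let K be a subspace of ℂ^n, Π_K the ℓ₂-orthogonal projector onto K, and Π_K^Θ the projector onto K orthogonal with respect to the inner product ⟨Θ·,Θ·⟩ (i.e., Π_K^Θ w = argmin_{v∈K} ‖Θ(w−v)‖). If Θ is an ε-embedding (ε<1) for the subspace K + span(w), then ‖(I−Π_K)w‖ ≤ ‖(I−Π_K^Θ)w‖ ≤ sqrt((1+ε)/(1−ε)) ‖(I−Π_K)w‖. -/

import Mathlib

open scoped ComplexInnerProductSpace

noncomputable section

set_option maxHeartbeats 1000000 in
/-- Comparison of the residuals of the ℓ₂-orthogonal projection and the sketched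
orthogonal projection, when Θ is an ε-embedding for K + span(w). -/
theorem sketched_projection_residual_bounds {n k : ℕ}
    (K : Submodule ℂ (EuclideanSpace ℂ (Fin n)))
    (Θ : EuclideanSpace ℂ (Fin n) →ₗ[ℂ] EuclideanSpace ℂ (Fin k))
    (w Pw : EuclideanSpace ℂ (Fin n)) (ε : ℝ) (hε : ε < 1)
    (hemb : ∀ x ∈ K ⊔ (ℂ ∙ w), ∀ y ∈ K ⊔ (ℂ ∙ w),
      ‖⟪x, y⟫ - ⟪Θ x, Θ y⟫‖ ≤ ε * ‖x‖ * ‖y‖)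
    (hPwK : Pw ∈ K) (hPw : ∀ v ∈ K, ‖Θ (w - Pw)‖ ≤ ‖Θ (w - v)‖) :
    ‖w - (K.orthogonalProjection w : EuclideanSpace ℂ (Fin n))‖ ≤ ‖w - Pw‖ ∧
      ‖w - Pw‖ ≤ Real.sqrt ((1 + ε) / (1 - ε)) *
        ‖w - (K.orthogonalProjection w : EuclideanSpace ℂ (Fin n))‖ := by
  set p : EuclideanSpace ℂ (Fin n) := (K.orthogonalProjection w : EuclideanSpace ℂ (Fin n)) with hp
  have hpK : p ∈ K := SetLike.coe_mem _
  have hperp : w - p ∈ Kᗮ := K.sub_starProjection_mem_orthogonal w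
  have hKS : K ≤ K ⊔ (ℂ ∙ w) := le_sup_left
  have hwS : w ∈ K ⊔ (ℂ ∙ w) :=
    Submodule.mem_sup_right (Submodule.mem_span_singleton_self w)
  have hrS : w - p ∈ K ⊔ (ℂ ∙ w) := Submodule.sub_mem _ hwS (hKS hpK)
  have hsS : w - Pw ∈ K ⊔ (ℂ ∙ w) := Submodule.sub_mem _ hwS (hKS hPwK)
  -- ε-embedding on the diagonal
  have h1 : ∀ x ∈ K ⊔ (ℂ ∙ w), |‖x‖ ^ 2 - ‖Θ x‖ ^ 2| ≤ ε * ‖x‖ ^ 2 := by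
    intro x hx
    have hd := hemb x hx x hx
    have e : (⟪x, x⟫ - ⟪Θ x, Θ x⟫ : ℂ) = ((‖x‖ ^ 2 - ‖Θ x‖ ^ 2 : ℝ) : ℂ) := by
      rw [inner_self_eq_norm_sq_to_K, inner_self_eq_norm_sq_to_K]
      push_cast
      norm_num
    rw [e, Complex.norm_real] at hd
    calc |‖x‖ ^ 2 - ‖Θ x‖ ^ 2| ≤ ε * ‖x‖ * ‖x‖ := hd
      _ = ε * ‖x‖ ^ 2 := by ring
  -- Pythagoras: first inequality
  have hsub : w - Pw = (w - p) + (p - Pw) := by abel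
  have hinner0 : ⟪w - p, p - Pw⟫ = (0 : ℂ) :=
    inner_eq_zero_symm.mp (hperp _ (K.sub_mem hpK hPwK))
  have hpyth : ‖w - Pw‖ ^ 2 = ‖w - p‖ ^ 2 + ‖p - Pw‖ ^ 2 := by
    rw [hsub]
    simpa [pow_two] using
      norm_add_sq_eq_norm_sq_add_norm_sq_of_inner_eq_zero (w - p) (p - Pw) hinner0
  have hfirst : ‖w - p‖ ≤ ‖w - Pw‖ := by
    nlinarith [sq_nonneg ‖p - Pw‖, norm_nonneg (w - p), norm_nonneg (w - Pw)]
  refine ⟨hfirst, ?_⟩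
  -- lower bound on the sketched norm of the sketched residual
  have hlow : (1 - ε) * ‖w - Pw‖ ^ 2 ≤ ‖Θ (w - Pw)‖ ^ 2 := by
    have h2 := abs_le.mp (h1 _ hsS)
    nlinarith [h2.1, h2.2]
  have hcmp : ‖Θ (w - Pw)‖ ≤ ‖Θ (w - p)‖ := hPw p hpK
  have hcmp2 : ‖Θ (w - Pw)‖ ^ 2 ≤ ‖Θ (w - p)‖ ^ 2 :=
    pow_le_pow_left₀ (norm_nonneg _) hcmp 2
  by_cases hr0 : w - p = 0
  · have hz : ‖Θ (w - p)‖ ^ 2 = 0 := by rw [hr0]; simp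
    have h4 : ‖w - Pw‖ ^ 2 ≤ 0 := by nlinarith [sq_nonneg ‖w - Pw‖]
    have hs0 : ‖w - Pw‖ = 0 :=
      pow_eq_zero_iff two_ne_zero |>.mp (le_antisymm h4 (sq_nonneg _))
    rw [hs0]
    positivity
  · have hrpos : (0 : ℝ) < ‖w - p‖ := norm_pos_iff.mpr hr0
    have hεnn : 0 ≤ ε := by
      have h5 := le_trans (abs_nonneg _) (h1 _ hrS)
      nlinarith [pow_pos hrpos 2]
    have hhigh : ‖Θ (w - p)‖ ^ 2 ≤ (1 + ε) * ‖w - p‖ ^ 2 := by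
      have h6 := abs_le.mp (h1 _ hrS)
      nlinarith [h6.1, h6.2]
    have hchain : ‖w - Pw‖ ^ 2 ≤ (1 + ε) / (1 - ε) * ‖w - p‖ ^ 2 := by
      rw [div_mul_eq_mul_div, le_div_iff₀ (by linarith)]
      nlinarith
    have hc : (0 : ℝ) ≤ (1 + ε) / (1 - ε) := div_nonneg (by linarith) (by linarith)
    calc ‖w - Pw‖ = Real.sqrt (‖w - Pw‖ ^ 2) := (Real.sqrt_sq (norm_nonneg _)).symm
      _ ≤ Real.sqrt ((1 + ε) / (1 - ε) * ‖w - p‖ ^ 2) := Real.sqrt_le_sqrt hchain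
      _ = Real.sqrt ((1 + ε) / (1 - ε)) * ‖w - p‖ := by
          rw [Real.sqrt_mul hc, Real.sqrt_sq (norm_nonneg _)]
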